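/- arXiv:0811.2590 — 4 statements merged into one kernel-verified Lean document; each statement's English description precedes it below -/
import Mathlib

section
/- Let A be a finite-dimensional Frobenius algebra over a field k with trace ε, and let f: A → A be an algebra automorphism with f² = id and ε(ab) = ε(b·f(a)) for all a, b ∈ A. Let [A,A]_t be the k-span of elements ab − b·f(a). Then the dual vector space of A/[A,A]_t is isomorphic to the center Z(A). -/
/-- For a Frobenius algebra `A` over a field `k` with Nakayama-type
involution `f` (an algebra automorphism with `f² = id` and `ε(ab) = ε(b·f(a))`),
the dual of the quotient of `A` by the twisted commutator subspace
(spanned by `ab − b·f(a)`) is isomorphic to the center `Z(A)`. -/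
theorem dual_quotient_twistedCommutator_equiv_center
    (k : Type*) [Field k] (A : Type*) [Ring A] [Algebra k A]
    [FiniteDimensional k A]
    (ε : A →ₗ[k] k)
    (hnd : ∀ a : A, (∀ b : A, ε (a * b) = 0) → a = 0)
    (f : A →ₐ[k] A)
    (hinv : ∀ a : A, f (f a) = a)
    (htw : ∀ a b : A, ε (a * b) = ε (b * f a)) :
    Nonempty
      (Module.Dual k (A ⧸ Submodule.span k {x : A | ∃ a b : A, x = a * b - b * f a})
        ≃ₗ[k] Subalgebra.center k A) := by
  set W : Submodule k A := Submodule.span k {x : A | ∃ a b : A, x = a * b - b * f a} with hW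
  -- The Frobenius pairing map Φ : A → Dual A
  let Φ : A →ₗ[k] Module.Dual k A :=
    { toFun := fun a => ε ∘ₗ LinearMap.mulLeft k a
      map_add' := by intro x y; ext b; simp [add_mul]
      map_smul' := by intro c x; ext b; simp [smul_mul_assoc] }
  have hΦapp : ∀ a b : A, Φ a b = ε (a * b) := fun a b => rfl
  have hΦinj : Function.Injective Φ := by
    rw [injective_iff_map_eq_zero]
    intro a ha
    exact hnd a fun b => by
      have := congrFun (congrArg DFunLike.coe ha) b
      simpa [hΦapp] using this
  have hrank : Module.finrank k A = Module.finrank k (Module.Dual k A) :=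
    (Subspace.dual_finrank_eq).symm
  let Φe : A ≃ₗ[k] Module.Dual k A := LinearMap.linearEquivOfInjective Φ hΦinj hrank
  have hΦe : ∀ a : A, Φe a = Φ a := fun a =>
    LinearMap.linearEquivOfInjective_apply hΦinj hrank a
  -- the submodule of A corresponding to the dual annihilator of W
  have hmem : ∀ c : A, Φ c ∈ W.dualAnnihilator ↔ c ∈ Subalgebra.center k A := by
    intro c
    rw [Submodule.mem_dualAnnihilator]
    constructor
    · intro h
      rw [Subalgebra.mem_center_iff]
      intro a
      have key : ∀ b : A, ε ((a * c - c * a) * b) = 0 := by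
        intro b
        have h1 : ε (c * (a * b - b * f a)) = 0 := by
          have := h (a * b - b * f a) (Submodule.subset_span ⟨a, b, rfl⟩)
          simpa [hΦapp] using this
        have h2 : ε (a * (c * b)) = ε (c * (b * f a)) := by
          rw [htw a (c * b), mul_assoc]
        have h3 : ε (c * (a * b)) = ε (c * (b * f a)) := by
          rw [mul_sub, map_sub, sub_eq_zero] at h1
          exact h1
        rw [sub_mul, map_sub, mul_assoc a c b, mul_assoc c a b, h2, h3, sub_self]
      exact sub_eq_zero.mp (hnd _ key)
    · intro hc w hw
      rw [Subalgebra.mem_center_iff] at hc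
      induction hw using Submodule.span_induction with
      | mem x hx =>
        obtain ⟨a, b, rfl⟩ := hx
        rw [hΦapp, mul_sub, map_sub]
        have h2 : ε (a * (c * b)) = ε ((c * b) * f a) := htw a (c * b)
        have e1 : a * (c * b) = c * (a * b) := by rw [← mul_assoc, hc a, mul_assoc]
        rw [e1, mul_assoc c b (f a)] at h2
        rw [h2, sub_self]
      | zero => simp
      | add x y _ _ hx hy => rw [map_add, hx, hy, add_zero]
      | smul t x _ hx => rw [map_smul, hx, smul_zero]
  -- S = center as a submodule
  have hS : W.dualAnnihilator.comap Φe.toLinearMap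
      = Subalgebra.toSubmodule (Subalgebra.center k A) := by
    ext c
    simp only [Submodule.mem_comap, LinearEquiv.coe_coe, hΦe, Subalgebra.mem_toSubmodule]
    exact hmem c
  exact ⟨W.dualQuotEquivDualAnnihilator.trans
    ((Φe.ofSubmodule' W.dualAnnihilator).symm.trans
      ((LinearEquiv.ofEq _ _ hS).trans
        (LinearEquiv.refl k (Subalgebra.center k A))))⟩
end

section
/- Let A be a finite-dimensional Frobenius algebra over a field k with trace ε and involution f as above, and define the twisted center TZ(A) = {b ∈ A : ba = f(a)b for all a ∈ A}. Then the dual vector space of A/[A,A] is isomorphic to TZ(A). -/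
/-- The twisted center `TZ(A) = {b | ∀ a, b*a = f(a)*b}` as a `k`-submodule. -/
def twistedCenter (k : Type*) [Field k] (A : Type*) [Ring A] [Algebra k A]
    (f : A →ₐ[k] A) : Submodule k A where
  carrier := {b : A | ∀ a : A, b * a = f a * b}
  add_mem' := by
    intro x y hx hy a
    simp only [add_mul, mul_add, hx a, hy a]
  zero_mem' := by intro a; simp
  smul_mem' := by
    intro c x hx a
    simp only [smul_mul_assoc, mul_smul_comm, hx a]

/-- For a Frobenius algebra `A` with involution `f` as above,
the dual of `A/[A,A]` is isomorphic to the twisted center `TZ(A)`. -/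
theorem dual_quotient_commutator_equiv_twistedCenter
    (k : Type*) [Field k] (A : Type*) [Ring A] [Algebra k A]
    [FiniteDimensional k A]
    (ε : A →ₗ[k] k)
    (hnd : ∀ a : A, (∀ b : A, ε (a * b) = 0) → a = 0)
    (f : A →ₐ[k] A)
    (hinv : ∀ a : A, f (f a) = a)
    (htw : ∀ a b : A, ε (a * b) = ε (b * f a)) :
    Nonempty
      (Module.Dual k (A ⧸ Submodule.span k {x : A | ∃ a b : A, x = a * b - b * a})
        ≃ₗ[k] twistedCenter k A f) := by
  classical
  set S : Submodule k A :=
    Submodule.span k {x : A | ∃ a b : A, x = a * b - b * a} with hS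
  -- The map b ↦ ε (b * ·)
  let Φ : A →ₗ[k] Module.Dual k A :=
    { toFun := fun b => ε ∘ₗ LinearMap.mulLeft k b
      map_add' := by intro x y; ext a; simp [add_mul]
      map_smul' := by intro c x; ext a; simp [smul_mul_assoc] }
  have hΦ : ∀ b a : A, Φ b a = ε (b * a) := fun _ _ => rfl
  have hinj : Function.Injective Φ := by
    rw [injective_iff_map_eq_zero]
    intro b hb
    exact hnd b fun c => by
      have := congrArg (fun φ : Module.Dual k A => φ c) hb
      simpa [hΦ] using this
  let e : A ≃ₗ[k] Module.Dual k A :=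
    LinearEquiv.ofBijective Φ ⟨hinj, by
      have := (LinearMap.injective_iff_surjective_of_finrank_eq_finrank
        (f := Φ) (Subspace.dual_finrank_eq (K := k) (V := A)).symm).mp hinj
      exact this⟩
  have hecoe : ∀ b : A, e b = Φ b := fun _ => rfl
  -- key auxiliary computation: ε (f a * x) = ε (x * a)
  have haux : ∀ a x : A, ε (f a * x) = ε (x * a) := by
    intro a x
    rw [htw (f a) x, hinv]
  -- membership characterization
  have hmem : ∀ b : A, Φ b ∈ S.dualAnnihilator ↔ b ∈ twistedCenter k A f := by
    intro b
    constructor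
    · intro h a
      have h0 : ∀ x ∈ {x : A | ∃ a b : A, x = a * b - b * a}, ε (b * x) = 0 := by
        intro x hx
        have := (Submodule.mem_dualAnnihilator _).mp h x (Submodule.subset_span hx)
        simpa [hΦ] using this
      have key : ∀ c : A, ε ((b * a - f a * b) * c) = 0 := by
        intro c
        have h1 : ε (b * (a * c - c * a)) = 0 := h0 _ ⟨a, c, rfl⟩
        have h2 : ε (f a * (b * c)) = ε (b * (c * a)) := by
          rw [haux a (b * c), mul_assoc]
        calc ε ((b * a - f a * b) * c)
            = ε (b * (a * c)) - ε (f a * (b * c)) := by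
              rw [sub_mul, map_sub, mul_assoc, mul_assoc]
          _ = ε (b * (a * c)) - ε (b * (c * a)) := by rw [h2]
          _ = ε (b * (a * c - c * a)) := by rw [mul_sub, map_sub]
          _ = 0 := h1
      have := hnd _ key
      exact sub_eq_zero.mp this
    · intro hb
      rw [Submodule.mem_dualAnnihilator]
      intro x hx
      have hle : S ≤ LinearMap.ker (Φ b) := by
        rw [hS, Submodule.span_le]
        rintro x ⟨a, c, rfl⟩
        simp only [SetLike.mem_coe, LinearMap.mem_ker, hΦ]
        have h1 : b * a = f a * b := hb a
        rw [mul_sub, map_sub, ← mul_assoc, ← mul_assoc, h1, mul_assoc,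
          haux a (b * c), mul_assoc, sub_self]
      exact hle hx
  -- the image of the twisted center is the dual annihilator of S
  have hmap : Submodule.map (e : A →ₗ[k] Module.Dual k A) (twistedCenter k A f)
      = S.dualAnnihilator := by
    ext φ
    constructor
    · rintro ⟨b, hb, rfl⟩
      exact (hmem b).mpr hb
    · intro h
      obtain ⟨b, rfl⟩ := e.surjective φ
      exact ⟨b, (hmem b).mp (by simpa [hecoe] using h), rfl⟩
  exact ⟨(S.dualQuotEquivDualAnnihilator).trans
    ((LinearEquiv.ofEq _ _ hmap.symm).trans
      (e.submoduleMap (twistedCenter k A f)).symm)⟩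
end

section
/- Define ε on the Nilcoxeter algebra NC_n by ε(T_σ) = 1 if σ = w₀ (the longest element of S_n, of length n(n−1)/2) and ε(T_σ) = 0 otherwise, extended linearly. Then ε is nondegenerate: for every σ ∈ S_n there exist γ, γ′ ∈ S_n with T_σ T_γ = T_{γ′} T_σ = T_{w₀}. Consequently the bilinear form (a,b) ↦ ε(ab) on NC_n is nondegenerate. -/
def invLength {m : ℕ} (σ : Equiv.Perm (Fin m)) : ℕ :=
  (Finset.univ.filter (fun p : Fin m × Fin m => p.1 < p.2 ∧ σ p.2 < σ p.1)).card

def longest (m : ℕ) : Equiv.Perm (Fin m) :=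
  ⟨Fin.rev, Fin.rev, fun i => i.rev_rev, fun i => i.rev_rev⟩

lemma longest_apply {m : ℕ} (i : Fin m) : longest m i = i.rev := rfl

lemma longest_inv (m : ℕ) : (longest m)⁻¹ = longest m := rfl

lemma invLength_inv {m : ℕ} (σ : Equiv.Perm (Fin m)) : invLength σ⁻¹ = invLength σ := by
  unfold invLength
  apply Finset.card_bij' (fun p _ => (σ⁻¹ p.2, σ⁻¹ p.1)) (fun p _ => (σ p.2, σ p.1))
  · intro p hp
    simp only [Finset.mem_filter, Finset.mem_univ, true_and] at hp ⊢
    simp [hp.1, hp.2]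
    exact hp.2
  · intro p hp
    simp only [Finset.mem_filter, Finset.mem_univ, true_and] at hp ⊢
    simp [hp.1, hp.2]
  · intro p hp; simp
  · intro p hp; simp

lemma invLength_longest_mul {m : ℕ} (σ : Equiv.Perm (Fin m)) :
    invLength (longest m * σ) + invLength σ = invLength (longest m) := by
  unfold invLength
  have h3 : (Finset.univ.filter (fun p : Fin m × Fin m =>
      p.1 < p.2 ∧ longest m p.2 < longest m p.1)) =
      (Finset.univ.filter (fun p : Fin m × Fin m => p.1 < p.2)) := by
    apply Finset.filter_congr
    intro p _
    simp [longest_apply, Fin.rev_lt_rev]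
  rw [h3]
  have h1 : (Finset.univ.filter (fun p : Fin m × Fin m =>
      p.1 < p.2 ∧ (longest m * σ) p.2 < (longest m * σ) p.1)) =
      (Finset.univ.filter (fun p : Fin m × Fin m => p.1 < p.2)).filter
        (fun p => ¬ (σ p.2 < σ p.1)) := by
    rw [Finset.filter_filter]
    apply Finset.filter_congr
    intro p _
    simp only [Equiv.Perm.mul_apply, longest_apply, Fin.rev_lt_rev]
    constructor
    · rintro ⟨h, h'⟩; exact ⟨h, not_lt_of_gt h'⟩
    · rintro ⟨h, h'⟩
      refine ⟨h, lt_of_le_of_ne (not_lt.mp h') ?_⟩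
      intro heq
      exact absurd (σ.injective heq) (ne_of_lt h)
  have h2 : (Finset.univ.filter (fun p : Fin m × Fin m =>
      p.1 < p.2 ∧ σ p.2 < σ p.1)) =
      (Finset.univ.filter (fun p : Fin m × Fin m => p.1 < p.2)).filter
        (fun p => σ p.2 < σ p.1) := by
    rw [Finset.filter_filter]
  rw [h1, h2, Nat.add_comm]
  exact Finset.card_filter_add_card_filter_not _

lemma invLength_mul_longest {m : ℕ} (σ : Equiv.Perm (Fin m)) :
    invLength (σ * longest m) + invLength σ = invLength (longest m) := by
  have h : σ * longest m = (longest m * σ⁻¹)⁻¹ := by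
    rw [mul_inv_rev, inv_inv, longest_inv]
  rw [h, invLength_inv, ← invLength_inv σ]
  exact invLength_longest_mul σ⁻¹

lemma invLength_add_right {m : ℕ} (σ : Equiv.Perm (Fin m)) :
    invLength σ + invLength (σ⁻¹ * longest m) = invLength (longest m) := by
  have h : σ⁻¹ * longest m = (longest m * σ)⁻¹ := by
    rw [mul_inv_rev, longest_inv]
  rw [h, invLength_inv, Nat.add_comm]
  exact invLength_longest_mul σ

lemma invLength_add_left {m : ℕ} (σ : Equiv.Perm (Fin m)) :
    invLength (longest m * σ⁻¹) + invLength σ = invLength (longest m) := by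
  have h : longest m * σ⁻¹ = (σ * longest m)⁻¹ := by
    rw [mul_inv_rev, longest_inv]
  rw [h, invLength_inv]
  exact invLength_mul_longest σ

/-- In the Nilcoxeter algebra `NC_{n+1}` (basis `T_w` with
`T_σ T_γ = T_{σγ}` when lengths add, else `0`), the trace `ε(T_σ) = δ_{σ,w₀}`
is nondegenerate: for every `σ` there exist `γ, γ'` with
`T_σ T_γ = T_{γ'} T_σ = T_{w₀}`; consequently the bilinear form
`(a,b) ↦ ε(ab)` is nondegenerate. -/
theorem nilCoxeter_trace_nondegenerate
    (k : Type*) [Field k] (A : Type*) [Ring A] [Algebra k A] (n : ℕ)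
    (B : Module.Basis (Equiv.Perm (Fin (n + 1))) k A)
    (hone : B 1 = 1)
    (hmul : ∀ σ γ : Equiv.Perm (Fin (n + 1)),
      B σ * B γ =
        if invLength (σ * γ) = invLength σ + invLength γ then B (σ * γ) else 0) :
    (∀ σ : Equiv.Perm (Fin (n + 1)), ∃ γ γ' : Equiv.Perm (Fin (n + 1)),
        B σ * B γ = B (longest (n + 1)) ∧ B γ' * B σ = B (longest (n + 1))) ∧
    (∀ a : A, (∀ b : A, B.coord (longest (n + 1)) (a * b) = 0) → a = 0) ∧
    (∀ b : A, (∀ a : A, B.coord (longest (n + 1)) (a * b) = 0) → b = 0) := by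
  set w := longest (n + 1) with hw
  -- key computations
  have keyR : ∀ σ τ : Equiv.Perm (Fin (n + 1)),
      B.coord w (B τ * B (σ⁻¹ * w)) = if τ = σ then 1 else 0 := by
    intro σ τ
    rw [hmul]
    by_cases h : invLength (τ * (σ⁻¹ * w)) = invLength τ + invLength (σ⁻¹ * w)
    · rw [if_pos h]
      simp only [Module.Basis.coord_apply, Module.Basis.repr_self]
      rw [Finsupp.single_apply]
      congr 1
      simp only [eq_iff_iff]
      constructor
      · intro he
        rw [← mul_assoc] at he
        have h1 : τ * σ⁻¹ = 1 := mul_right_cancel (b := w) (he.trans (one_mul w).symm)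
        exact mul_inv_eq_one.mp h1
      · intro he; subst he; group
    · rw [if_neg h]
      have hne : τ ≠ σ := by
        intro he; subst he
        apply h
        rw [← mul_assoc, mul_inv_cancel, one_mul]
        exact (invLength_add_right τ).symm
      simp [hne]
  have keyL : ∀ σ τ : Equiv.Perm (Fin (n + 1)),
      B.coord w (B (w * σ⁻¹) * B τ) = if τ = σ then 1 else 0 := by
    intro σ τ
    rw [hmul]
    by_cases h : invLength (w * σ⁻¹ * τ) = invLength (w * σ⁻¹) + invLength τ
    · rw [if_pos h]
      simp only [Module.Basis.coord_apply, Module.Basis.repr_self]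
      rw [Finsupp.single_apply]
      congr 1
      simp only [eq_iff_iff]
      constructor
      · intro he
        rw [mul_assoc] at he
        have h1 : σ⁻¹ * τ = 1 := mul_left_cancel (a := w) (he.trans (mul_one w).symm)
        exact (inv_mul_eq_one.mp h1).symm
      · intro he; subst he; group
    · rw [if_neg h]
      have hne : τ ≠ σ := by
        intro he; subst he
        apply h
        rw [mul_assoc, inv_mul_cancel, mul_one]
        exact (invLength_add_left τ).symm
      simp [hne]
  refine ⟨?_, ?_, ?_⟩
  · intro σ
    refine ⟨σ⁻¹ * w, w * σ⁻¹, ?_, ?_⟩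
    · rw [hmul]
      rw [← mul_assoc, mul_inv_cancel, one_mul, if_pos (invLength_add_right σ).symm]
    · rw [hmul]
      rw [mul_assoc, inv_mul_cancel, mul_one, if_pos (invLength_add_left σ).symm]
  · intro a ha
    rw [← B.forall_coord_eq_zero_iff]
    intro σ
    have hlin : B.coord σ = (B.coord w).comp (LinearMap.mulRight k (B (σ⁻¹ * w))) := by
      apply B.ext
      intro τ
      simp only [LinearMap.comp_apply, LinearMap.mulRight_apply, keyR σ τ,
        Module.Basis.coord_apply, Module.Basis.repr_self, Finsupp.single_apply]
    rw [hlin]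
    exact ha _
  · intro b hb
    rw [← B.forall_coord_eq_zero_iff]
    intro σ
    have hlin : B.coord σ = (B.coord w).comp (LinearMap.mulLeft k (B (w * σ⁻¹))) := by
      apply B.ext
      intro τ
      simp only [LinearMap.comp_apply, LinearMap.mulLeft_apply, keyL σ τ,
        Module.Basis.coord_apply, Module.Basis.repr_self, Finsupp.single_apply]
    rw [hlin]
    exact hb _
end

section
/- In the Nilcoxeter algebra NC_n with m = ⌊(n−1)/2⌋ and twisting involution f(T_i) = T_{n−i}, for every permutation σ of {1,…,m}, the products T_1 T_2 ⋯ T_m and T_{σ(1)} T_{σ(2)} ⋯ T_{σ(m)} are equal in the quotient NC_n/[NC_n,NC_n]_t. -/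
namespace NilCoxAux14

variable {K : Type*} [Field K] {A : Type*} [Ring A] [Algebra K A] {n : ℕ}

def U (T : Fin n → A) : ℕ → A := fun j => if h : j < n then T ⟨j, h⟩ else 1

def P (T : Fin n → A) (l : List ℕ) : A := (l.map (U T)).prod

lemma P_nil (T : Fin n → A) : P T [] = 1 := rfl

lemma P_cons (T : Fin n → A) (a : ℕ) (l : List ℕ) : P T (a :: l) = U T a * P T l := by
  simp [P]

lemma P_append (T : Fin n → A) (l₁ l₂ : List ℕ) :
    P T (l₁ ++ l₂) = P T l₁ * P T l₂ := by
  simp [P]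

lemma commute_P (T : Fin n → A) (c : A) (l : List ℕ)
    (h : ∀ x ∈ l, Commute c (U T x)) : Commute c (P T l) := by
  apply Commute.list_prod_right
  intro y hy
  obtain ⟨x, hx, rfl⟩ := List.mem_map.mp hy
  exact h x hx

lemma twist_mem (f : A →ₐ[K] A) (a b : A) :
    a * b - b * f a ∈ Submodule.span K {x : A | ∃ a b : A, x = a * b - b * f a} :=
  Submodule.subset_span ⟨a, b, rfl⟩

lemma sub_mem_trans {S : Submodule K A} {x y z : A}
    (h1 : x - y ∈ S) (h2 : y - z ∈ S) : x - z ∈ S := by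
  have := add_mem h1 h2
  rwa [sub_add_sub_cancel] at this

lemma rot_mem (T : Fin n → A) (f : A →ₐ[K] A)
    (hc : ∀ i j : ℕ, j < n → i + 1 < j → U T i * U T j = U T j * U T i)
    (hr : ∀ i, i < n → f (U T i) = U T (n - 1 - i))
    (a : ℕ) (l : List ℕ) (ha : a < n / 2)
    (hl : ∀ x ∈ l, x < n / 2 ∧ x ≠ a) :
    P T (a :: l) - P T (l ++ [a]) ∈
      Submodule.span K {x : A | ∃ a b : A, x = a * b - b * f a} := by
  have ha' : a < n := by omega
  have hcomm1 : Commute (U T (n - 1 - a)) (P T l) := by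
    apply commute_P
    intro x hx
    have hx' := hl x hx
    exact (hc x (n - 1 - a) (by omega) (by omega)).symm
  have h1 := twist_mem (K := K) f (U T a) (P T l)
  have h2 := twist_mem (K := K) f (U T (n - 1 - a)) (P T l)
  rw [hr a ha'] at h1
  rw [hr (n - 1 - a) (by omega), show n - 1 - (n - 1 - a) = a by omega] at h2
  have hsum := add_mem h1 h2
  rw [hcomm1.eq, sub_add_sub_cancel] at hsum
  simpa [P] using hsum

lemma move_mem (T : Fin n → A) (f : A →ₐ[K] A)
    (hc : ∀ i j : ℕ, j < n → i + 1 < j → U T i * U T j = U T j * U T i)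
    (hr : ∀ i, i < n → f (U T i) = U T (n - 1 - i))
    (p : List ℕ) (a : ℕ) (w : List ℕ)
    (hp : ∀ x ∈ p, Commute (U T a) (U T x)) (ha : a < n / 2)
    (hw : ∀ x ∈ p ++ w, x < n / 2 ∧ x ≠ a) :
    P T (p ++ a :: w) - P T ((p ++ w) ++ [a]) ∈
      Submodule.span K {x : A | ∃ a b : A, x = a * b - b * f a} := by
  have h1 : P T (p ++ a :: w) = P T (a :: (p ++ w)) := by
    rw [P_append, P_cons, P_cons, P_append, ← mul_assoc,
      ← (commute_P T (U T a) p hp).eq, mul_assoc]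
  rw [h1]
  exact rot_mem T f hc hr a (p ++ w) ha hw

lemma rotAll_mem (T : Fin n → A) (f : A →ₐ[K] A)
    (hc : ∀ i j : ℕ, j < n → i + 1 < j → U T i * U T j = U T j * U T i)
    (hr : ∀ i, i < n → f (U T i) = U T (n - 1 - i))
    (z : List ℕ) : ∀ (rest : List ℕ) (kk : ℕ), kk ≤ n / 2 →
    (∀ x ∈ z, kk + 1 ≤ x ∧ x < n / 2) → (∀ x ∈ rest, x < n / 2) →
    (z ++ rest).Nodup →
    P T (List.range kk ++ z ++ rest) - P T (List.range kk ++ rest ++ z) ∈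
      Submodule.span K {x : A | ∃ a b : A, x = a * b - b * f a} := by
  induction z with
  | nil => intro rest kk _ _ _ _; simp
  | cons a z' ih =>
    intro rest kk hk hz hrest hnd
    have haz : kk + 1 ≤ a ∧ a < n / 2 := hz a (by simp)
    have hanotin : a ∉ z' ++ rest := by
      have h : (a :: (z' ++ rest)).Nodup := by simpa using hnd
      exact (List.nodup_cons.mp h).1
    have step1 : P T (List.range kk ++ (a :: z') ++ rest) -
        P T (List.range kk ++ z' ++ (rest ++ [a])) ∈
        Submodule.span K {x : A | ∃ a b : A, x = a * b - b * f a} := by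
      have e1 : List.range kk ++ (a :: z') ++ rest =
          List.range kk ++ a :: (z' ++ rest) := by simp
      have e2 : List.range kk ++ z' ++ (rest ++ [a]) =
          (List.range kk ++ (z' ++ rest)) ++ [a] := by simp
      rw [e1, e2]
      refine move_mem T f hc hr (List.range kk) a (z' ++ rest) ?_ haz.2 ?_
      · intro x hx
        have hx' : x < kk := List.mem_range.mp hx
        exact (hc x a (by omega) (by omega)).symm
      · intro x hx
        rcases List.mem_append.mp hx with h | h
        · have := List.mem_range.mp h; exact ⟨by omega, by omega⟩
        · rcases List.mem_append.mp h with h' | h'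
          · exact ⟨(hz x (by simp [h'])).2,
              fun he => hanotin (he ▸ List.mem_append_left _ h')⟩
          · exact ⟨hrest x h', fun he => hanotin (he ▸ List.mem_append_right _ h')⟩
    have step2 : P T (List.range kk ++ z' ++ (rest ++ [a])) -
        P T (List.range kk ++ (rest ++ [a]) ++ z') ∈
        Submodule.span K {x : A | ∃ a b : A, x = a * b - b * f a} := by
      refine ih (rest ++ [a]) kk hk (fun x hx => hz x (by simp [hx])) ?_ ?_
      · intro x hx
        rcases List.mem_append.mp hx with h | h
        · exact hrest x h
        · have hxa : x = a := by simpa using h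
          exact hxa ▸ haz.2
      · have h : ((z' ++ rest) ++ [a]).Nodup :=
          ((List.perm_append_singleton a _).nodup_iff).mpr (by simpa using hnd)
        simpa using h
    have e3 : List.range kk ++ (rest ++ [a]) ++ z' =
        List.range kk ++ rest ++ (a :: z') := by simp
    rw [e3] at step2
    exact sub_mem_trans step1 step2

lemma sort_mem (T : Fin n → A) (f : A →ₐ[K] A)
    (hc : ∀ i j : ℕ, j < n → i + 1 < j → U T i * U T j = U T j * U T i)
    (hr : ∀ i, i < n → f (U T i) = U T (n - 1 - i))
    (w : List ℕ) (kk : ℕ) (hk : kk ≤ n / 2)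
    (hw : ∀ x ∈ w, kk ≤ x ∧ x < n / 2) (hnd : w.Nodup)
    (hlen : w.length = n / 2 - kk) :
    P T (List.range kk ++ w) - P T (List.range (n / 2)) ∈
      Submodule.span K {x : A | ∃ a b : A, x = a * b - b * f a} := by
  rcases eq_or_ne w [] with rfl | hne
  · have hkeq : kk = n / 2 := by simp at hlen; omega
    subst hkeq
    simp
  · have hlpos : w.length ≠ 0 := fun h => hne (List.eq_nil_of_length_eq_zero h)
    have hklt : kk < n / 2 := by omega
    have hkmem : kk ∈ w := by
      have hcardeq : w.toFinset = Finset.Ico kk (n / 2) := by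
        apply Finset.eq_of_subset_of_card_le
        · intro x hx
          rw [List.mem_toFinset] at hx
          exact Finset.mem_Ico.mpr ⟨(hw x hx).1, (hw x hx).2⟩
        · rw [List.toFinset_card_of_nodup hnd, hlen, Nat.card_Ico]
      have : kk ∈ w.toFinset := by
        rw [hcardeq]; exact Finset.mem_Ico.mpr ⟨le_rfl, hklt⟩
      simpa using this
    obtain ⟨u, v, rfl⟩ := List.append_of_mem hkmem
    have hnd' : (kk :: (u ++ v)).Nodup := List.perm_middle.nodup hnd
    have hknotin : kk ∉ u ++ v := (List.nodup_cons.mp hnd').1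
    have hnduv : (u ++ v).Nodup := (List.nodup_cons.mp hnd').2
    have hmemw : ∀ x ∈ u ++ v, x ∈ u ++ kk :: v := by
      intro x hx
      rcases List.mem_append.mp hx with h | h
      · exact List.mem_append_left _ h
      · exact List.mem_append_right _ (List.mem_cons_of_mem _ h)
    have hbound : ∀ x ∈ u ++ v, kk + 1 ≤ x ∧ x < n / 2 := by
      intro x hx
      have h1 := hw x (hmemw x hx)
      have h2 : x ≠ kk := fun he => hknotin (he ▸ hx)
      exact ⟨by omega, h1.2⟩
    have hlen' : (u ++ v).length = n / 2 - (kk + 1) := by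
      simp only [List.length_append, List.length_cons] at hlen ⊢
      omega
    have hrec := sort_mem T f hc hr (u ++ v) (kk + 1) (by omega) hbound hnduv hlen'
    by_cases hc1 : kk + 1 ∈ u
    · have hkp1v : kk + 1 ∉ v :=
        fun h => (List.disjoint_of_nodup_append hnduv) hc1 h
      have hvcomm : ∀ x ∈ v, Commute (U T kk) (U T x) := by
        intro x hx
        have hxb := hbound x (List.mem_append_right _ hx)
        have hxne : x ≠ kk + 1 := fun he => hkp1v (he ▸ hx)
        exact hc kk x (by omega) (by omega)
      have hcv := (commute_P T (U T kk) v hvcomm).eq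
      have heq1 : P T (List.range kk ++ (u ++ kk :: v)) =
          P T (List.range kk ++ (u ++ v) ++ [kk]) := by
        simp only [P_append, P_cons, P_nil, mul_one, mul_assoc]
        rw [hcv]
      have step2 := rotAll_mem T f hc hr (u ++ v) [kk] kk hk hbound
        (by intro x hx; simp at hx; omega)
        (by
          have h : ((u ++ v) ++ [kk]).Nodup :=
            ((List.perm_append_singleton kk _).nodup_iff).mpr hnd'
          exact h)
      have e4 : List.range kk ++ [kk] ++ (u ++ v) =
          List.range (kk + 1) ++ (u ++ v) := by
        rw [List.range_succ]
      rw [e4] at step2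
      rw [heq1]
      exact sub_mem_trans step2 hrec
    · have hucomm : ∀ x ∈ u, Commute (U T kk) (U T x) := by
        intro x hx
        have hxb := hbound x (List.mem_append_left _ hx)
        have hxne : x ≠ kk + 1 := fun he => hc1 (he ▸ hx)
        exact hc kk x (by omega) (by omega)
      have hcu := (commute_P T (U T kk) u hucomm).eq
      have heq : P T (List.range kk ++ (u ++ kk :: v)) =
          P T (List.range (kk + 1) ++ (u ++ v)) := by
        have key : P T u * (U T kk * P T v) = U T kk * (P T u * P T v) := by
          rw [← mul_assoc, ← hcu, mul_assoc]
        rw [List.range_succ]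
        simp only [P_append, P_cons, P_nil, mul_one]
        rw [mul_assoc, key]
      rw [heq]
      exact hrec
termination_by w.length
decreasing_by
  subst_vars
  simp only [List.length_append, List.length_cons]
  omega

end NilCoxAux14

/-- In the Nilcoxeter algebra `NC_{n+1}` (generators `T_1,…,T_n`,
here `T 0, …, T (n-1)` 0-indexed) with `m = ⌊n/2⌋ = ⌊((n+1)−1)/2⌋` and twisting
involution `f(T_i) = T_{n−i}` (`i ↦ i.rev` 0-indexed), for every permutation
`σ` of `{1,…,m}`, the products `T_1 T_2 ⋯ T_m` and `T_{σ(1)} T_{σ(2)} ⋯ T_{σ(m)}`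
are equal in the quotient `NC/[NC,NC]_t`. -/
theorem nilCoxeter_product_permutation_invariant_mod_twisted
    (k : Type*) [Field k] (A : Type*) [Ring A] [Algebra k A] (n : ℕ)
    (T : Fin n → A)
    (hsq : ∀ i : Fin n, T i * T i = 0)
    (hbraid : ∀ i j : Fin n, (i : ℕ) + 1 = (j : ℕ) →
      T i * T j * T i = T j * T i * T j)
    (hcomm : ∀ i j : Fin n, (i : ℕ) + 1 < (j : ℕ) → T i * T j = T j * T i)
    (f : A →ₐ[k] A)
    (hf : ∀ i : Fin n, f (T i) = T i.rev) :
    ∀ σ : Equiv.Perm (Fin (n / 2)),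
      ((List.finRange (n / 2)).map
          (fun (j : Fin (n / 2)) => T (Fin.castLE (Nat.div_le_self n 2) j))).prod -
        ((List.finRange (n / 2)).map
          (fun (j : Fin (n / 2)) => T (Fin.castLE (Nat.div_le_self n 2) (σ j)))).prod ∈
        Submodule.span k {x : A | ∃ a b : A, x = a * b - b * f a} := by
  intro σ
  classical
  have hcU : ∀ i j : ℕ, j < n → i + 1 < j →
      NilCoxAux14.U T i * NilCoxAux14.U T j = NilCoxAux14.U T j * NilCoxAux14.U T i := by
    intro i j hj hij
    have hi : i < n := by omega
    simp only [NilCoxAux14.U, dif_pos hi, dif_pos hj]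
    exact hcomm ⟨i, hi⟩ ⟨j, hj⟩ hij
  have hrU : ∀ i, i < n → f (NilCoxAux14.U T i) = NilCoxAux14.U T (n - 1 - i) := by
    intro i hi
    have h2 : n - 1 - i < n := by omega
    simp only [NilCoxAux14.U, dif_pos hi, dif_pos h2]
    rw [hf ⟨i, hi⟩]
    congr 1
    ext
    simp only [Fin.val_rev]
    omega
  have hconv : ∀ (g : Fin (n / 2) → Fin (n / 2)),
      ((List.finRange (n / 2)).map
        (fun (j : Fin (n / 2)) => T (Fin.castLE (Nat.div_le_self n 2) (g j)))) =
      ((List.finRange (n / 2)).map (fun j => ((g j : Fin (n / 2)) : ℕ))).map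
        (NilCoxAux14.U T) := by
    intro g
    rw [List.map_map]
    apply List.map_congr_left
    intro j _
    have h1 : ((g j : Fin (n / 2)) : ℕ) < n := by
      have := (g j).isLt; omega
    simp only [Function.comp, NilCoxAux14.U, dif_pos h1]
    congr 1
  have hid : ((List.finRange (n / 2)).map (fun j : Fin (n / 2) => ((j : Fin (n / 2)) : ℕ)))
      = List.range (n / 2) := by
    apply List.ext_getElem <;> simp
  set l₂ : List ℕ := (List.finRange (n / 2)).map (fun j => ((σ j : Fin (n / 2)) : ℕ)) with hl₂
  have hgoal1 : ((List.finRange (n / 2)).map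
      (fun (j : Fin (n / 2)) => T (Fin.castLE (Nat.div_le_self n 2) j))).prod
      = NilCoxAux14.P T (List.range (n / 2)) := by
    have := hconv id
    simp only [id] at this
    rw [this, hid]
    rfl
  have hgoal2 : ((List.finRange (n / 2)).map
      (fun (j : Fin (n / 2)) => T (Fin.castLE (Nat.div_le_self n 2) (σ j)))).prod
      = NilCoxAux14.P T l₂ := by
    rw [hconv σ]
    rfl
  have hndσ : l₂.Nodup := by
    apply List.Nodup.map
    · exact Fin.val_injective.comp σ.injective
    · exact List.nodup_finRange _
  have hbσ : ∀ x ∈ l₂, 0 ≤ x ∧ x < n / 2 := by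
    intro x hx
    rw [hl₂, List.mem_map] at hx
    obtain ⟨j, _, rfl⟩ := hx
    exact ⟨Nat.zero_le _, (σ j).isLt⟩
  have hlenσ : l₂.length = n / 2 - 0 := by simp [hl₂]
  have key := NilCoxAux14.sort_mem T f hcU hrU l₂ 0 (Nat.zero_le _) hbσ hndσ hlenσ
  rw [List.range_zero, List.nil_append] at key
  rw [hgoal1, hgoal2]
  have := neg_mem key
  rwa [neg_sub] at this
end
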